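/- Let K be a field and K[X] = K[x_1,…,x_n]. Let I ⊆ K[X] be an ideal, let O = {t_1,…,t_μ} be an order ideal with border ∂O = {b_1,…,b_ν}, and let G = {g_1,…,g_ν} ⊆ I be a set of polynomials of the form g_j = b_j − Σ_{i=1}^{μ} α_{ij} t_i with α_{ij} ∈ K. If K[X] = I ⊕ ⟨O⟩_K as K-vector spaces, then the ideal generated by G equals I. -/

import Mathlib

open MvPolynomial

/-- An order ideal: a finite set of monomials (represented by their exponent
vectors) closed under divisibility (`t' ∣ t` corresponds to `t' ≤ t`). -/
def IsOrderIdeal {n : ℕ} (O : Finset (Fin n →₀ ℕ)) : Prop :=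
  ∀ t ∈ O, ∀ t' : Fin n →₀ ℕ, t' ≤ t → t' ∈ O

/-- The border `∂O = {x_j · t : j, t ∈ O} \ O` of an order ideal, with the
convention `∂∅ = {1}`. -/
def border {n : ℕ} (O : Finset (Fin n →₀ ℕ)) : Set (Fin n →₀ ℕ) :=
  if O.Nonempty then
    {b | (∃ j : Fin n, ∃ t ∈ O, b = t + Finsupp.single j 1) ∧ b ∉ O}
  else {0}

/-- The `K`-vector subspace of `K[X]` spanned by a set of monomials. -/
noncomputable def monSpan (K : Type*) [Field K] {n : ℕ} (O : Set (Fin n →₀ ℕ)) :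
    Submodule K (MvPolynomial (Fin n) K) :=
  Submodule.span K ((fun m => (monomial m (1 : K))) '' O)

/-- if `G ⊆ I` consists of polynomials `g_j = b_j - ∑ α_{ij} t_i`
(one for every border term `b_j` of the order ideal `O`) and
`K[X] = I ⊕ ⟨O⟩_K` as `K`-vector spaces, then the ideal generated by `G` is `I`. -/
theorem ideal_span_of_border_prebasis {n : ℕ} {K : Type*} [Field K]
    (I : Ideal (MvPolynomial (Fin n) K))
    (O : Finset (Fin n →₀ ℕ)) (hO : IsOrderIdeal O)
    (g : (Fin n →₀ ℕ) → MvPolynomial (Fin n) K)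
    (hgI : ∀ b ∈ border O, g b ∈ I)
    (hgform : ∀ b ∈ border O, ∃ α : (Fin n →₀ ℕ) → K,
      g b = monomial b 1 - ∑ t ∈ O, monomial t (α t))
    (hcompl : IsCompl (Submodule.restrictScalars K I)
      (monSpan K (O : Set (Fin n →₀ ℕ)))) :
    Ideal.span (g '' border O) = I := by
  set J := Ideal.span (g '' border O) with hJdef
  have hJI : J ≤ I := Ideal.span_le.mpr (by rintro p ⟨b, hb, rfl⟩; exact hgI b hb)
  rcases O.eq_empty_or_nonempty with hOe | hOne
  · -- O empty : g 0 = 1, so J = ⊤ ⊇ I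
    subst hOe
    have hb0 : (0 : Fin n →₀ ℕ) ∈ border (∅ : Finset (Fin n →₀ ℕ)) := by
      simp [border]
    obtain ⟨α, hα⟩ := hgform 0 hb0
    have hg1 : g 0 = 1 := by simpa using hα
    have h1 : (1 : MvPolynomial (Fin n) K) ∈ J := by
      rw [← hg1]; exact Ideal.subset_span (Set.mem_image_of_mem g hb0)
    exact le_antisymm hJI (by rw [(Ideal.eq_top_iff_one J).mpr h1]; exact le_top)
  · obtain ⟨t0, ht0⟩ := hOne
    have h0O : (0 : Fin n →₀ ℕ) ∈ O := hO t0 ht0 0 zero_le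
    have hborder : border O =
        {b | (∃ j : Fin n, ∃ t ∈ O, b = t + Finsupp.single j 1) ∧ b ∉ O} :=
      if_pos ⟨t0, ht0⟩
    set S : Submodule K (MvPolynomial (Fin n) K) :=
      Submodule.restrictScalars K J ⊔ monSpan K (O : Set (Fin n →₀ ℕ)) with hS
    have hmonO : ∀ t ∈ O, monomial t (1 : K) ∈ S := fun t ht =>
      Submodule.mem_sup_right (Submodule.subset_span ⟨t, ht, rfl⟩)
    have hg_mem : ∀ b ∈ border O, monomial b (1 : K) ∈ S := by
      intro b hb
      obtain ⟨α, hα⟩ := hgform b hb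
      have h1 : g b ∈ S :=
        Submodule.mem_sup_left (show g b ∈ Submodule.restrictScalars K J from
          Ideal.subset_span (Set.mem_image_of_mem g hb))
      have h2 : (∑ t ∈ O, monomial t (α t)) ∈ S := by
        refine Submodule.sum_mem _ fun t ht => ?_
        have heq : monomial t (α t) = α t • monomial t (1 : K) := by
          simp [smul_monomial]
        rw [heq]; exact Submodule.smul_mem _ _ (hmonO t ht)
      have heq : monomial b (1 : K) = g b + ∑ t ∈ O, monomial t (α t) := by
        rw [hα]; ring
      rw [heq]; exact Submodule.add_mem _ h1 h2
    have hmulX : ∀ (j : Fin n), ∀ p ∈ S, (X j : MvPolynomial (Fin n) K) * p ∈ S := by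
      intro j p hp
      rw [hS, Submodule.mem_sup] at hp
      obtain ⟨a, ha, b, hb, rfl⟩ := hp
      rw [mul_add]
      refine Submodule.add_mem _ (Submodule.mem_sup_left (show X j * a ∈
        Submodule.restrictScalars K J from J.mul_mem_left _ ha)) ?_
      refine Submodule.span_induction (p := fun q _ => (X j : MvPolynomial (Fin n) K) * q ∈ S)
        ?_ ?_ ?_ ?_ hb
      · rintro q ⟨t, ht, rfl⟩
        have hxm : (X j : MvPolynomial (Fin n) K) * monomial t 1 =
            monomial (t + Finsupp.single j 1) 1 := by
          rw [X, monomial_mul, one_mul, add_comm]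
        rw [hxm]
        by_cases hmem : t + Finsupp.single j 1 ∈ O
        · exact hmonO _ hmem
        · exact hg_mem _ (by rw [hborder]; exact ⟨⟨j, t, ht, rfl⟩, hmem⟩)
      · simp
      · intro x y hx hy hx' hy'
        rw [mul_add]; exact Submodule.add_mem _ hx' hy'
      · intro c x hx hx'
        rw [mul_smul_comm]; exact Submodule.smul_mem _ _ hx'
    have hmono : ∀ (d : ℕ) (m : Fin n →₀ ℕ), (∑ i, m i) = d → monomial m (1 : K) ∈ S := by
      intro d
      induction d using Nat.strong_induction_on with
      | _ d ih =>
        intro m hm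
        by_cases hmO : m ∈ O
        · exact hmonO m hmO
        · have hm0 : m ≠ 0 := by rintro rfl; exact hmO h0O
          obtain ⟨j, hj⟩ : ∃ j, m j ≠ 0 := by
            by_contra h; push_neg at h
            exact hm0 (Finsupp.ext fun j => h j)
          set m' := m - Finsupp.single j 1 with hm'
          have hle : Finsupp.single j 1 ≤ m := by
            rw [Finsupp.single_le_iff]; omega
          have hmeq : m' + Finsupp.single j 1 = m := tsub_add_cancel_of_le hle
          have hdeg : (∑ i, m' i) < d := by
            have hsum : (∑ i, m' i) + 1 = d := by
              rw [← hm, ← hmeq]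
              simp [Finsupp.add_apply, Finsupp.single_apply, Finset.sum_add_distrib]
            omega
          have hmem' := ih _ hdeg m' rfl
          have hx : (X j : MvPolynomial (Fin n) K) * monomial m' 1 = monomial m 1 := by
            rw [X, monomial_mul, one_mul, add_comm, hmeq]
          exact hx ▸ hmulX j _ hmem'
    have hStop : S = ⊤ := by
      rw [eq_top_iff]
      intro p _
      rw [p.as_sum]
      refine Submodule.sum_mem _ fun v _ => ?_
      have heq : monomial v (coeff v p) = coeff v p • monomial v (1 : K) := by
        simp [smul_monomial]
      rw [heq]; exact Submodule.smul_mem _ _ (hmono _ v rfl)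
    refine le_antisymm hJI fun f hf => ?_
    have hfS : f ∈ S := hStop ▸ Submodule.mem_top
    rw [hS, Submodule.mem_sup] at hfS
    obtain ⟨a, ha, b, hb, rfl⟩ := hfS
    have hbI : b ∈ Submodule.restrictScalars K I := by
      have heq : b = (a + b) - a := by ring
      rw [heq]; exact Submodule.sub_mem _ hf (hJI ha)
    have hb0 : b = 0 := (Submodule.disjoint_def.mp hcompl.disjoint) b hbI hb
    rw [hb0, add_zero]
    exact ha
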